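/- Under the 'good event' that all confidence intervals are valid, if an arm a_t is pulled by the UCB rule (i.e., UCB_{a_t}(t) ≥ UCB_{a*_t}(t) where a*_t is the active arm whose ball of radius ε_{a*_t}(t)/L covers the optimal arm a*), then the suboptimality gap satisfies Δ_{a_t} = μ* - μ_{a_t} ≤ 3·ε_{a_t}(t). Concretely: let μ : X → ℝ be L-Lipschitz on a metric space X, and suppose for arms a, b ∈ X and positive reals ε_a, ε_b and estimates μ̂_a, μ̂_b we have |μ̂_a - μ_a| ≤ ε_a, |μ̂_b - μ_b| ≤ ε_b, d(b, a*) ≤ ε_b/L for an optimal arm a* (μ(a*) = μ* = sup μ), and μ̂_a + ε_a ≥ μ̂_b + ε_b. Then μ* - μ_a ≤ 3ε_a. -/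
import Mathlib

/-- Under valid confidence intervals, if the pulled arm's UCB dominates the
UCB (with doubled width) of the active arm covering the optimum, its gap is at most 3ε_a. -/
theorem stmt_5 {X : Type*} [MetricSpace X] (L : ℝ) (hL : 0 < L)
    (μ : X → ℝ) (hμ : ∀ x y : X, |μ x - μ y| ≤ L * dist x y)
    (a b astar : X) (μhata μhatb εa εb : ℝ) (hεa : 0 < εa) (hεb : 0 < εb)
    (hopt : ∀ x : X, μ x ≤ μ astar)
    (hconfa : |μhata - μ a| ≤ εa)
    (hconfb : |μhatb - μ b| ≤ εb)
    (hcover : dist b astar ≤ εb / L)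
    (hUCB : μhatb + 2 * εb ≤ μhata + εa) :
    μ astar - μ a ≤ 3 * εa := by
  have h1 : |μ b - μ astar| ≤ L * dist b astar := hμ b astar
  have h2 : L * dist b astar ≤ εb := by
    calc L * dist b astar ≤ L * (εb / L) := by nlinarith
    _ = εb := by field_simp
  have h3 := abs_le.mp h1
  have h4 := abs_le.mp hconfa
  have h5 := abs_le.mp hconfb
  linarith [h3.1, h3.2, h4.1, h4.2, h5.1, h5.2]
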